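/- Let n ≥ 1, let (r₁,…,r_ℓ) be a composition of n with partial sums r̂_j = r₁+⋯+r_j, let w = w_{r₁,…,r_ℓ} be the associated relevant Weyl element, and let a₁,…,a_n be nonzero real numbers. Then the following are equivalent: (i) for every real n×n upper-triangular unipotent matrix u with w·u·w⁻¹ upper triangular, e^{2πi·∑_{i=1}^{n−1} (a_i/a_{i+1})·(w·u·w⁻¹)_{i,i+1}} = e^{2πi·∑_{i=1}^{n−1} u_{i,i+1}}; (ii) a_i = a_{i+1} for every index i ∈ {1,…,n−1} that is not one of the partial sums r̂₁, …, r̂_{ℓ−1}. -/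

import Mathlib

/-- Partial sums `r̂_i = r₁ + ⋯ + r_i` of a composition (1-based indexing). -/
def rhat (r : ℕ → ℕ) (i : ℕ) : ℕ := ∑ j ∈ Finset.Icc 1 i, r j

lemma rhat_zero (r : ℕ → ℕ) : rhat r 0 = 0 := by simp [rhat]

lemma rhat_mono (r : ℕ → ℕ) : Monotone (rhat r) := fun i j h =>
  Finset.sum_le_sum_of_subset (Finset.Icc_subset_Icc_right h)

lemma rhat_succ (r : ℕ → ℕ) (i : ℕ) (hi : 1 ≤ i) : rhat r i = rhat r (i-1) + r i := by
  obtain ⟨k, rfl⟩ : ∃ k, i = k + 1 := ⟨i - 1, by omega⟩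
  simp only [rhat, Nat.add_sub_cancel]
  exact Finset.sum_Icc_succ_top (by omega) r

noncomputable def blk (r : ℕ → ℕ) (a : ℕ) : ℕ :=
  open scoped Classical in
  if h : ∃ i, a < rhat r i then Nat.find h else 0

section blkfacts
variable {n ℓ : ℕ} {r : ℕ → ℕ}

lemma blk_spec (hsum : rhat r ℓ = n) {a : ℕ} (han : a < n) : a < rhat r (blk r a) := by
  classical
  have h : ∃ i, a < rhat r i := ⟨ℓ, by omega⟩
  unfold blk
  rw [dif_pos h]
  exact Nat.find_spec h

lemma blk_min (hsum : rhat r ℓ = n) {a i : ℕ} (han : a < n) (hi : a < rhat r i) :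
    blk r a ≤ i := by
  classical
  have h : ∃ i, a < rhat r i := ⟨ℓ, by omega⟩
  unfold blk
  rw [dif_pos h]
  exact Nat.find_le hi

lemma blk_gt (hsum : rhat r ℓ = n) {a i : ℕ} (han : a < n) (hi : rhat r i ≤ a) :
    i < blk r a := by
  by_contra h
  push_neg at h
  have := rhat_mono r h
  have := blk_spec hsum han
  omega

lemma blk_pos (hsum : rhat r ℓ = n) {a : ℕ} (han : a < n) : 1 ≤ blk r a := by
  have := blk_gt hsum han (i := 0) (by rw [rhat_zero]; omega)
  omega

lemma blk_le (hsum : rhat r ℓ = n) {a : ℕ} (han : a < n) : blk r a ≤ ℓ :=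
  blk_min hsum han (by omega)

lemma blk_pred (hsum : rhat r ℓ = n) {a : ℕ} (han : a < n) :
    rhat r (blk r a - 1) ≤ a := by
  by_contra h
  push_neg at h
  have := blk_min hsum han h
  have := blk_pos hsum han
  omega

lemma blk_mono (hsum : rhat r ℓ = n) {a b : ℕ} (hab : a ≤ b) (hbn : b < n) :
    blk r a ≤ blk r b := by
  have := blk_spec hsum hbn
  exact blk_min hsum (by omega) (by omega)

/-- strict increase of `rhat` within the range of the composition -/
lemma rhat_lt (hr : ∀ i ∈ Finset.Icc 1 ℓ, 1 ≤ r i) {i j : ℕ} (hij : i < j) (hj : j ≤ ℓ) :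
    rhat r i < rhat r j := by
  have h1 : rhat r j = rhat r (j-1) + r j := rhat_succ r j (by omega)
  have h2 : 1 ≤ r j := hr j (by simp; omega)
  have h3 : rhat r i ≤ rhat r (j-1) := rhat_mono r (by omega)
  omega

noncomputable def sig (n : ℕ) (r : ℕ → ℕ) (a : ℕ) : ℕ :=
  a - rhat r (blk r a - 1) + (n - rhat r (blk r a))

/-- all the basic facts about block index and sigma at once -/
lemma sig_facts (hsum : rhat r ℓ = n) {a : ℕ} (han : a < n) :
    rhat r (blk r a - 1) ≤ a ∧ a < rhat r (blk r a) ∧ rhat r (blk r a) ≤ n ∧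
    1 ≤ blk r a ∧ blk r a ≤ ℓ ∧
    sig n r a = a - rhat r (blk r a - 1) + (n - rhat r (blk r a)) := by
  refine ⟨blk_pred hsum han, blk_spec hsum han, ?_, blk_pos hsum han, blk_le hsum han, rfl⟩
  rw [← hsum]
  exact rhat_mono r (blk_le hsum han)

lemma sig_lt (hsum : rhat r ℓ = n) {a : ℕ} (han : a < n) : sig n r a < n := by
  obtain ⟨h1, h2, h3, _, _, h6⟩ := sig_facts hsum han
  omega

/-- images of distinct blocks are in reversed disjoint ranges -/
lemma sig_block_lt (hsum : rhat r ℓ = n) {a b : ℕ} (han : a < n) (hbn : b < n)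
    (hblk : blk r a < blk r b) : sig n r b < sig n r a := by
  obtain ⟨a1, a2, a3, a4, a5, a6⟩ := sig_facts hsum han
  obtain ⟨b1, b2, b3, b4, b5, b6⟩ := sig_facts hsum hbn
  have : rhat r (blk r a) ≤ rhat r (blk r b - 1) := rhat_mono r (by omega)
  omega

lemma sig_inj (hsum : rhat r ℓ = n) {a b : ℕ} (han : a < n) (hbn : b < n)
    (h : sig n r a = sig n r b) : a = b := by
  rcases lt_trichotomy (blk r a) (blk r b) with hc | hc | hc
  · have := sig_block_lt hsum han hbn hc; omega
  · obtain ⟨a1, a2, a3, a4, a5, a6⟩ := sig_facts hsum han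
    obtain ⟨b1, b2, b3, b4, b5, b6⟩ := sig_facts hsum hbn
    rw [hc] at a1 a2 a6
    omega
  · have := sig_block_lt hsum hbn han hc; omega

lemma sig_succ_same (hsum : rhat r ℓ = n) {i : ℕ} (hi : i + 1 < n)
    (hb : blk r i = blk r (i+1)) : sig n r (i+1) = sig n r i + 1 := by
  obtain ⟨a1, a2, a3, a4, a5, a6⟩ := sig_facts hsum (show i < n by omega)
  obtain ⟨b1, b2, b3, b4, b5, b6⟩ := sig_facts hsum hi
  rw [← hb] at b1 b2 b6
  omega

lemma sig_same_blk (hsum : rhat r ℓ = n) {p q : ℕ} (hp : p < n) (hq : q < n)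
    (hb : blk r p = blk r q) : sig n r p + q = sig n r q + p := by
  obtain ⟨a1, a2, a3, a4, a5, a6⟩ := sig_facts hsum hp
  obtain ⟨b1, b2, b3, b4, b5, b6⟩ := sig_facts hsum hq
  rw [← hb] at b1 b2 b6
  omega

/-- dichotomy for consecutive indices -/
lemma blk_succ_dichotomy (hsum : rhat r ℓ = n) {i : ℕ} (hi : i + 1 < n) :
    blk r i = blk r (i+1) ∨ (blk r i < blk r (i+1) ∧ i + 1 = rhat r (blk r i)) := by
  have hmono := blk_mono hsum (show i ≤ i+1 by omega) hi
  have h2 := blk_spec hsum (show i < n by omega)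
  rcases eq_or_lt_of_le hmono with h | h
  · exact Or.inl h
  · right
    refine ⟨h, ?_⟩
    have : ¬ (i + 1 < rhat r (blk r i)) := by
      intro hlt
      have := blk_min hsum hi hlt
      omega
    omega

/-- characterization: consecutive indices in same block iff `i+1` is not a partial sum -/
lemma same_blk_iff (hsum : rhat r ℓ = n) (hr : ∀ i ∈ Finset.Icc 1 ℓ, 1 ≤ r i)
    {i : ℕ} (hi : i + 1 < n) :
    blk r i = blk r (i+1) ↔ ∀ j, 1 ≤ j → j < ℓ → i + 1 ≠ rhat r j := by
  constructor
  · intro hb j hj1 hj2 heq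
    have h1 : blk r i ≤ j := blk_min hsum (by omega) (by omega)
    have h2 : j < blk r (i+1) := blk_gt hsum hi (by omega)
    omega
  · intro hno
    rcases blk_succ_dichotomy hsum hi with h | ⟨h1, h2⟩
    · exact h
    · exfalso
      have hb1 : 1 ≤ blk r i := blk_pos hsum (by omega)
      have hb2 : blk r (i+1) ≤ ℓ := blk_le hsum hi
      exact hno (blk r i) hb1 (by omega) h2
end blkfacts

/-- The relevant Weyl element `w_{r₁,…,r_ℓ}`: the `n×n` permutation matrix built of
identity blocks `I_{r₁},…,I_{r_ℓ}` along the anti-diagonal, with `I_{r₁}` in the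
top-right corner and `I_{r_ℓ}` in the bottom-left corner. -/
noncomputable def relevantWeyl (n ℓ : ℕ) (r : ℕ → ℕ) : Matrix (Fin n) (Fin n) ℝ :=
  open scoped Classical in
  Matrix.of fun a b =>
    if ∃ i ∈ Finset.Icc 1 ℓ, rhat r (i - 1) ≤ (a : ℕ) ∧ (a : ℕ) < rhat r i ∧
        (b : ℕ) = ((a : ℕ) - rhat r (i - 1)) + (n - rhat r i) then 1 else 0

section weyl
variable {n ℓ : ℕ} {r : ℕ → ℕ}

/-- sigma as a map of `Fin n` -/
noncomputable def sigF (hsum : rhat r ℓ = n) : Fin n → Fin n :=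
  fun a => ⟨sig n r (a : ℕ), sig_lt hsum a.isLt⟩

lemma sigF_inj (hsum : rhat r ℓ = n) : Function.Injective (sigF hsum) := by
  intro a b h
  exact Fin.ext (sig_inj hsum a.isLt b.isLt (congrArg Fin.val h))

noncomputable def sigE (hsum : rhat r ℓ = n) : Equiv.Perm (Fin n) :=
  Equiv.ofBijective (sigF hsum)
    ((Finite.injective_iff_bijective).1 (sigF_inj hsum))

lemma sigE_apply (hsum : rhat r ℓ = n) (a : Fin n) : sigE hsum a = sigF hsum a := rfl

lemma relevantWeyl_apply (hsum : rhat r ℓ = n) (hr : ∀ i ∈ Finset.Icc 1 ℓ, 1 ≤ r i)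
    (a b : Fin n) :
    relevantWeyl n ℓ r a b = if b = sigF hsum a then 1 else 0 := by
  classical
  have hiff : (∃ i ∈ Finset.Icc 1 ℓ, rhat r (i - 1) ≤ (a:ℕ) ∧ (a:ℕ) < rhat r i ∧
      (b : ℕ) = ((a:ℕ) - rhat r (i - 1)) + (n - rhat r i)) ↔ b = sigF hsum a := by
    constructor
    · rintro ⟨i, hi, h1, h2, h3⟩
      simp only [Finset.mem_Icc] at hi
      have hkle : blk r (a:ℕ) ≤ i := blk_min hsum a.isLt h2
      have hkge : i - 1 < blk r (a:ℕ) := blk_gt hsum a.isLt h1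
      have hik : i = blk r (a:ℕ) := by omega
      apply Fin.ext
      rw [h3, hik]
      rfl
    · intro h
      have ⟨f1, f2, f3, f4, f5, f6⟩ := sig_facts hsum a.isLt
      exact ⟨blk r (a:ℕ), by simp only [Finset.mem_Icc]; omega, f1, f2, by
        rw [h]; exact f6⟩
  simp only [relevantWeyl, Matrix.of_apply, hiff]

lemma weyl_mul_transpose (hsum : rhat r ℓ = n) (hr : ∀ i ∈ Finset.Icc 1 ℓ, 1 ≤ r i) :
    relevantWeyl n ℓ r * (relevantWeyl n ℓ r).transpose = 1 := by
  ext a b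
  simp only [Matrix.mul_apply, Matrix.transpose_apply, relevantWeyl_apply hsum hr,
    Matrix.one_apply, ite_mul, one_mul, zero_mul, Finset.sum_ite_eq' Finset.univ,
    Finset.mem_univ, if_true]
  by_cases h : a = b
  · subst h; simp
  · rw [if_neg (fun hc => h (sigF_inj hsum hc)), if_neg h]

lemma weyl_inv (hsum : rhat r ℓ = n) (hr : ∀ i ∈ Finset.Icc 1 ℓ, 1 ≤ r i) :
    (relevantWeyl n ℓ r)⁻¹ = (relevantWeyl n ℓ r).transpose :=
  Matrix.inv_eq_right_inv (weyl_mul_transpose hsum hr)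

lemma conj_apply (hsum : rhat r ℓ = n) (hr : ∀ i ∈ Finset.Icc 1 ℓ, 1 ≤ r i)
    (u : Matrix (Fin n) (Fin n) ℝ) (i j : Fin n) :
    (relevantWeyl n ℓ r * u * (relevantWeyl n ℓ r)⁻¹) i j
      = u (sigF hsum i) (sigF hsum j) := by
  rw [weyl_inv hsum hr]
  simp only [Matrix.mul_apply, Matrix.transpose_apply, relevantWeyl_apply hsum hr,
    ite_mul, one_mul, zero_mul, mul_ite, mul_zero, mul_one,
    Finset.sum_ite_eq' Finset.univ, Finset.mem_univ, if_true]
end weyl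

/-- Let `(r₁,…,r_ℓ)` be a composition of `n`, `w` the associated
relevant Weyl element, and `a₁,…,a_n` nonzero reals (1-based indexing via
`a : ℕ → ℝ`).  Then the compatibility condition
`e^{2πi·∑_i (a_i/a_{i+1})(wuw⁻¹)_{i,i+1}} = e^{2πi·∑_i u_{i,i+1}}` for all
upper-triangular unipotent `u` with `wuw⁻¹` upper triangular holds **iff**
`a_i = a_{i+1}` for every `i ∈ {1,…,n−1}` that is not a partial sum
`r̂₁,…,r̂_{ℓ−1}`. -/
theorem stmt_18 (n : ℕ) (hn : 1 ≤ n) (ℓ : ℕ) (r : ℕ → ℕ) (hℓ : 1 ≤ ℓ)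
    (hr : ∀ i ∈ Finset.Icc 1 ℓ, 1 ≤ r i) (hsum : rhat r ℓ = n)
    (a : ℕ → ℝ) (ha : ∀ i ∈ Finset.Icc 1 n, a i ≠ 0) :
    (∀ u : Matrix (Fin n) (Fin n) ℝ,
        (∀ i j : Fin n, j < i → u i j = 0) → (∀ i : Fin n, u i i = 1) →
        (∀ i j : Fin n, j < i →
          (relevantWeyl n ℓ r * u * (relevantWeyl n ℓ r)⁻¹) i j = 0) →
        Complex.exp (2 * (Real.pi : ℂ) * Complex.I
            * ((∑ p ∈ Finset.univ.filter
                  (fun p : Fin n × Fin n => (p.2 : ℕ) = (p.1 : ℕ) + 1),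
                (a ((p.1 : ℕ) + 1) / a ((p.1 : ℕ) + 2))
                  * (relevantWeyl n ℓ r * u * (relevantWeyl n ℓ r)⁻¹) p.1 p.2 : ℝ) : ℂ))
          = Complex.exp (2 * (Real.pi : ℂ) * Complex.I
              * ((∑ p ∈ Finset.univ.filter
                    (fun p : Fin n × Fin n => (p.2 : ℕ) = (p.1 : ℕ) + 1),
                  u p.1 p.2 : ℝ) : ℂ)))
      ↔ (∀ i : ℕ, 1 ≤ i → i ≤ n - 1 →
          (∀ j : ℕ, 1 ≤ j → j < ℓ → i ≠ rhat r j) → a i = a (i + 1)) := by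
  set S : Finset (Fin n × Fin n) :=
    Finset.univ.filter (fun p : Fin n × Fin n => (p.2 : ℕ) = (p.1 : ℕ) + 1) with hSdef
  have hSmem : ∀ p : Fin n × Fin n, p ∈ S ↔ (p.2 : ℕ) = (p.1 : ℕ) + 1 := by
    intro p; simp [hSdef]
  constructor
  · intro H i hi1 hi2 hnp
    have hin : i < n := by omega
    have him : i - 1 < n := by omega
    have hie : i - 1 + 1 = i := by omega
    -- i-1 and i are in the same block
    have hblk : blk r (i-1) = blk r (i-1+1) := by
      refine (same_blk_iff hsum hr (by omega)).2 ?_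
      intro j hj1 hj2
      rw [hie]
      exact hnp j hj1 hj2
    set A : Fin n := sigF hsum ⟨i-1, him⟩ with hAdef
    set B : Fin n := sigF hsum ⟨i, hin⟩ with hBdef
    have hAB : (B : ℕ) = (A : ℕ) + 1 := by
      show sig n r i = sig n r (i-1) + 1
      have := sig_succ_same hsum (show i - 1 + 1 < n by omega) hblk
      rw [hie] at this
      exact this
    have hABne : A ≠ B := by
      intro h; rw [h] at hAB; omega
    -- the coefficient
    set C : ℝ := a i / a (i+1) with hCdef
    suffices hC : C = 1 by
      have hane : a (i+1) ≠ 0 := ha (i+1) (by simp [Finset.mem_Icc]; omega)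
      rw [hCdef, div_eq_one_iff_eq hane] at hC
      exact hC
    by_contra hCne
    set t : ℝ := 1 / (2 * (C - 1)) with htdef
    -- the test matrix
    set u : Matrix (Fin n) (Fin n) ℝ := Matrix.of (fun x y =>
      (if x = y then (1:ℝ) else 0) + (if x = A ∧ y = B then t else 0)) with hudef
    have hu1 : ∀ x y : Fin n, y < x → u x y = 0 := by
      intro x y hxy
      have hne : x ≠ y := by intro h; rw [h] at hxy; exact lt_irrefl _ hxy
      have hne2 : ¬ (x = A ∧ y = B) := by
        rintro ⟨hx, hy⟩
        have hlt := Fin.lt_def.1 hxy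
        have hxv : (x:ℕ) = (A:ℕ) := congrArg Fin.val hx
        have hyv : (y:ℕ) = (B:ℕ) := congrArg Fin.val hy
        omega
      simp [hudef, hne, hne2]
    have hu2 : ∀ x : Fin n, u x x = 1 := by
      intro x
      have hne2 : ¬ (x = A ∧ x = B) := by
        rintro ⟨rfl, h⟩; exact hABne h
      simp [hudef, hne2]
    have hu3 : ∀ x y : Fin n, y < x →
        (relevantWeyl n ℓ r * u * (relevantWeyl n ℓ r)⁻¹) x y = 0 := by
      intro x y hxy
      rw [conj_apply hsum hr]
      have hne : sigF hsum x ≠ sigF hsum y := by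
        intro h; exact absurd (sigF_inj hsum h) (by intro h'; rw [h'] at hxy; exact lt_irrefl _ hxy)
      have hne2 : ¬ (sigF hsum x = A ∧ sigF hsum y = B) := by
        rintro ⟨hxA, hyB⟩
        have hx : x = ⟨i-1, him⟩ := sigF_inj hsum hxA
        have hy : y = ⟨i, hin⟩ := sigF_inj hsum hyB
        rw [hx, hy] at hxy
        have := Fin.lt_def.1 hxy
        simp at this
        omega
      simp [hudef, hne, hne2]
    have key := H u hu1 hu2 hu3
    -- compute the two sums
    have hP0S : (⟨i-1, him⟩, (⟨i, hin⟩ : Fin n)) ∈ S := (hSmem _).2 (by simp; omega)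
    have hXval : (∑ p ∈ S, (a ((p.1 : ℕ) + 1) / a ((p.1 : ℕ) + 2))
          * (relevantWeyl n ℓ r * u * (relevantWeyl n ℓ r)⁻¹) p.1 p.2) = C * t := by
      have step : ∀ p ∈ S, (a ((p.1 : ℕ) + 1) / a ((p.1 : ℕ) + 2))
            * (relevantWeyl n ℓ r * u * (relevantWeyl n ℓ r)⁻¹) p.1 p.2
          = if p = (⟨i-1, him⟩, (⟨i, hin⟩ : Fin n)) then C * t else 0 := by
        intro p hp
        have hp2 : (p.2 : ℕ) = (p.1 : ℕ) + 1 := (hSmem p).1 hp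
        rw [conj_apply hsum hr]
        have hne : sigF hsum p.1 ≠ sigF hsum p.2 := by
          intro h
          have := congrArg Fin.val (sigF_inj hsum h)
          omega
        by_cases hc : p = (⟨i-1, him⟩, (⟨i, hin⟩ : Fin n))
        · rw [if_pos hc, hc]
          have : u A B = t := by
            simp [hudef, hABne]
          show a ((i-1) + 1) / a ((i-1) + 2) * u A B = C * t
          rw [this, hie, show i - 1 + 2 = i + 1 by omega]
        · rw [if_neg hc]
          have hne2 : ¬ (sigF hsum p.1 = A ∧ sigF hsum p.2 = B) := by
            rintro ⟨hxA, hyB⟩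
            exact hc (Prod.ext (sigF_inj hsum hxA) (sigF_inj hsum hyB))
          simp [hudef, hne, hne2]
      rw [Finset.sum_congr rfl step, Finset.sum_ite_eq' S _ (fun _ => C * t), if_pos hP0S]
    have hABS : ((A, B) : Fin n × Fin n) ∈ S := (hSmem _).2 hAB
    have hYval : (∑ p ∈ S, u p.1 p.2) = t := by
      have step : ∀ p ∈ S, u p.1 p.2 = if p = (A, B) then t else 0 := by
        intro p hp
        have hp2 : (p.2 : ℕ) = (p.1 : ℕ) + 1 := (hSmem p).1 hp
        have hne : p.1 ≠ p.2 := by intro h; rw [h] at hp2; omega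
        by_cases hc : p = (A, B)
        · rw [if_pos hc, hc]
          simp [hudef, hABne]
        · rw [if_neg hc]
          have hne2 : ¬ (p.1 = A ∧ p.2 = B) := by
            rintro ⟨hA', hB'⟩
            exact hc (Prod.ext hA' hB')
          simp [hudef, hne, hne2]
      rw [Finset.sum_congr rfl step, Finset.sum_ite_eq' S _ (fun _ => t), if_pos hABS]
    rw [hXval, hYval] at key
    -- extract the contradiction
    obtain ⟨k, hk⟩ := Complex.exp_eq_exp_iff_exists_int.1 key
    have h2pine : (2 * (Real.pi : ℂ) * Complex.I) ≠ 0 :=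
      mul_ne_zero (mul_ne_zero two_ne_zero
        (by exact_mod_cast Real.pi_ne_zero)) Complex.I_ne_zero
    have h0 : (2 * (Real.pi : ℂ) * Complex.I)
        * (((C * t : ℝ) : ℂ) - ((t : ℝ) : ℂ) - (k : ℂ)) = 0 := by
      linear_combination hk
    have hz : ((C * t : ℝ) : ℂ) - ((t : ℝ) : ℂ) - (k : ℂ) = 0 :=
      (mul_eq_zero.1 h0).resolve_left h2pine
    have hzr : C * t - t - (k : ℝ) = 0 := by exact_mod_cast hz
    have hC1 : C - 1 ≠ 0 := sub_ne_zero.2 hCne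
    have hCt : (C - 1) * t = 1 / 2 := by
      rw [htdef]
      field_simp
    have hk12 : (k : ℝ) = 1 / 2 := by nlinarith [hCt, hzr]
    have : (2 * k : ℤ) = 1 := by
      have : (2 * (k:ℝ)) = 1 := by linarith
      exact_mod_cast this
    omega
  · intro hii u h1 h2 h3
    have hX : (∑ p ∈ S, (a ((p.1 : ℕ) + 1) / a ((p.1 : ℕ) + 2))
          * (relevantWeyl n ℓ r * u * (relevantWeyl n ℓ r)⁻¹) p.1 p.2)
        = ∑ p ∈ S, u p.1 p.2 := by
      -- step A : rewrite LHS
      have stepA : (∑ p ∈ S, (a ((p.1 : ℕ) + 1) / a ((p.1 : ℕ) + 2))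
            * (relevantWeyl n ℓ r * u * (relevantWeyl n ℓ r)⁻¹) p.1 p.2)
          = ∑ p ∈ S, (if blk r (p.1 : ℕ) = blk r ((p.1 : ℕ) + 1)
              then u (sigF hsum p.1) (sigF hsum p.2) else 0) := by
        refine Finset.sum_congr rfl (fun p hp => ?_)
        have hp2 : (p.2 : ℕ) = (p.1 : ℕ) + 1 := (hSmem p).1 hp
        have hlt : (p.1 : ℕ) + 1 < n := hp2 ▸ p.2.isLt
        rw [conj_apply hsum hr]
        by_cases hb : blk r (p.1 : ℕ) = blk r ((p.1 : ℕ) + 1)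
        · rw [if_pos hb]
          have hnp := (same_blk_iff hsum hr hlt).1 hb
          have he : a ((p.1:ℕ)+1) = a ((p.1:ℕ)+2) :=
            hii ((p.1:ℕ)+1) (by omega) (by omega) hnp
          rw [he, div_self (ha ((p.1:ℕ)+2) (by simp [Finset.mem_Icc]; omega)), one_mul]
        · rw [if_neg hb]
          have hmono : blk r (p.1:ℕ) ≤ blk r ((p.1:ℕ)+1) :=
            blk_mono hsum (by omega) hlt
          have hblt : blk r (p.1:ℕ) < blk r ((p.2:ℕ)) := by rw [hp2]; omega
          have hslt := sig_block_lt hsum p.1.isLt p.2.isLt hblt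
          rw [h1 (sigF hsum p.1) (sigF hsum p.2) (by exact hslt), mul_zero]
      -- step B : rewrite RHS
      have stepB : (∑ p ∈ S, u p.1 p.2)
          = ∑ p ∈ S, (if (((sigE hsum).symm p.2 : Fin n) : ℕ)
              = (((sigE hsum).symm p.1 : Fin n) : ℕ) + 1 then u p.1 p.2 else 0) := by
        refine Finset.sum_congr rfl (fun p hp => ?_)
        have hp2 : (p.2 : ℕ) = (p.1 : ℕ) + 1 := (hSmem p).1 hp
        set q1 := (sigE hsum).symm p.1 with hq1def
        set q2 := (sigE hsum).symm p.2 with hq2def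
        have hq1 : sigF hsum q1 = p.1 := (sigE hsum).apply_symm_apply p.1
        have hq2 : sigF hsum q2 = p.2 := (sigE hsum).apply_symm_apply p.2
        by_cases hc : (q2 : ℕ) = (q1 : ℕ) + 1
        · rw [if_pos hc]
        · rw [if_neg hc]
          -- show q2 < q1, then apply h3
          have hne : q1 ≠ q2 := by
            intro he; rw [he, hq2] at hq1
            have := congrArg Fin.val hq1; omega
          have hq2lt : (q2 : ℕ) < (q1 : ℕ) := by
            rcases lt_trichotomy (q1 : ℕ) (q2 : ℕ) with h | h | h
            · exfalso
              have hmono : blk r (q1:ℕ) ≤ blk r (q2:ℕ) :=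
                blk_mono hsum (by omega) q2.isLt
              rcases eq_or_lt_of_le hmono with hbe | hbl
              · have := sig_same_blk hsum q1.isLt q2.isLt hbe
                have e1 : sig n r (q1:ℕ) = (p.1:ℕ) := congrArg Fin.val hq1
                have e2 : sig n r (q2:ℕ) = (p.2:ℕ) := congrArg Fin.val hq2
                omega
              · have := sig_block_lt hsum q1.isLt q2.isLt hbl
                have e1 : sig n r (q1:ℕ) = (p.1:ℕ) := congrArg Fin.val hq1
                have e2 : sig n r (q2:ℕ) = (p.2:ℕ) := congrArg Fin.val hq2
                omega
            · exact absurd (Fin.ext h) hne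
            · exact h
          rw [← hq1, ← hq2, ← conj_apply hsum hr u]
          exact h3 q1 q2 hq2lt
      rw [stepA, stepB, ← Finset.sum_filter, ← Finset.sum_filter]
      -- step C : bijection
      refine Finset.sum_bij' (fun p _ => (sigF hsum p.1, sigF hsum p.2))
        (fun p _ => ((sigE hsum).symm p.1, (sigE hsum).symm p.2)) ?_ ?_ ?_ ?_ ?_
      · intro p hp
        simp only [Finset.mem_filter] at hp ⊢
        obtain ⟨hpS, hpb⟩ := hp
        have hp2 : (p.2 : ℕ) = (p.1 : ℕ) + 1 := (hSmem p).1 hpS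
        have hlt : (p.1 : ℕ) + 1 < n := hp2 ▸ p.2.isLt
        have hsucc : sig n r ((p.1:ℕ) + 1) = sig n r (p.1:ℕ) + 1 :=
          sig_succ_same hsum hlt hpb
        have hmem : (sigF hsum p.2 : ℕ) = (sigF hsum p.1 : ℕ) + 1 := by
          show sig n r (p.2:ℕ) = sig n r (p.1:ℕ) + 1
          rw [hp2]; exact hsucc
        refine ⟨(hSmem _).2 hmem, ?_⟩
        have e1 : (sigE hsum).symm (sigF hsum p.1) = p.1 := (sigE hsum).symm_apply_apply p.1
        have e2 : (sigE hsum).symm (sigF hsum p.2) = p.2 := (sigE hsum).symm_apply_apply p.2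
        simpa [e1, e2] using hp2
      · intro p hp
        simp only [Finset.mem_filter] at hp ⊢
        obtain ⟨hpS, hpc⟩ := hp
        have hp2 : (p.2 : ℕ) = (p.1 : ℕ) + 1 := (hSmem p).1 hpS
        set q1 := (sigE hsum).symm p.1 with hq1def
        set q2 := (sigE hsum).symm p.2 with hq2def
        have hq1 : sigF hsum q1 = p.1 := (sigE hsum).apply_symm_apply p.1
        have hq2 : sigF hsum q2 = p.2 := (sigE hsum).apply_symm_apply p.2
        have e1 : sig n r (q1:ℕ) = (p.1:ℕ) := congrArg Fin.val hq1
        have e2 : sig n r (q2:ℕ) = (p.2:ℕ) := congrArg Fin.val hq2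
        refine ⟨(hSmem _).2 hpc, ?_⟩
        -- blk r q1 = blk r (q1 + 1); note q1+1 = q2
        have hq21 : (q2:ℕ) = (q1:ℕ) + 1 := hpc
        have hlt : (q1:ℕ) + 1 < n := hq21 ▸ q2.isLt
        have hmono : blk r (q1:ℕ) ≤ blk r ((q1:ℕ)+1) := blk_mono hsum (by omega) hlt
        rcases eq_or_lt_of_le hmono with hbe | hbl
        · exact hbe
        · exfalso
          have hblt : blk r (q1:ℕ) < blk r (q2:ℕ) := by rw [hq21]; omega
          have := sig_block_lt hsum q1.isLt q2.isLt hblt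
          omega
      · intro p hp
        have e1 : (sigE hsum).symm (sigF hsum p.1) = p.1 := (sigE hsum).symm_apply_apply p.1
        have e2 : (sigE hsum).symm (sigF hsum p.2) = p.2 := (sigE hsum).symm_apply_apply p.2
        exact Prod.ext e1 e2
      · intro p hp
        have e1 : sigF hsum ((sigE hsum).symm p.1) = p.1 := (sigE hsum).apply_symm_apply p.1
        have e2 : sigF hsum ((sigE hsum).symm p.2) = p.2 := (sigE hsum).apply_symm_apply p.2
        exact Prod.ext e1 e2
      · intro p hp
        rfl
    rw [hX]
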